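/- arXiv:1311.1642 — 4 statements merged into one kernel-verified Lean document; each statement's English description precedes it below -/
import Mathlib

section
/- Fix 1 ≤ k ≤ d and x̂ ∈ ℝ^d with r_k(x̂) ≠ 0. Suppose x̂ ∈ D_κ with κ < α̃/√(α̃² + (β+2L)²), where α, β, L > 0, e ∈ ℝ^n, 1 ≤ p < ∞, and 0 < α̃ ≤ α − 2‖e‖_{ℓ_p}/r_k(x̂). Then for every j = 1,…,k: α r_j(x̂) > 2‖e‖_{ℓ_p} + 2L‖x̂ − x̂_{{k}}‖₂ + β‖x̂_{{j}} − x̂_{{k}}‖₂. -/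
noncomputable section
open scoped BigOperators

/-- Best `j`-sparse approximation of `x`, keeping the `j` largest-in-magnitude entries
(as given by the sorting permutation `σ`). -/
def trunc {d : ℕ} (σ : Equiv.Perm (Fin d)) (j : ℕ) (x : EuclideanSpace ℝ (Fin d)) :
    EuclideanSpace ℝ (Fin d) :=
  WithLp.toLp 2 (fun i => if (σ.symm i : ℕ) < j then x i else 0)

/-- The `ℓ_p` norm of a vector in `ℝ^n`. -/
def lpNorm {n : ℕ} (p : ℝ) (e : Fin n → ℝ) : ℝ :=
  (∑ i, |e i| ^ p) ^ (1 / p)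

lemma geom_aux {q : ℝ} (h0 : 0 ≤ q) (h1 : q < 1) (N : ℕ) :
    ∑ s ∈ Finset.range N, q ^ s ≤ 1 / (1 - q) := by
  rw [le_div_iff₀ (by linarith)]
  have h := geom_sum_mul q N
  nlinarith [pow_nonneg h0 N]

set_option maxHeartbeats 1000000 in
/-- Lemma 3.4 of the paper: under the decay condition `x̂ ∈ 𝒟_κ` with
`κ < α̃/√(α̃² + (β+2L)²)` and `0 < α̃ ≤ α − 2‖e‖_p/r_k(x̂)`, one has, for `j = 1,…,k`,
`α r_j(x̂) > 2‖e‖_p + 2L‖x̂ − x̂_{k}‖ + β‖x̂_{j} − x̂_{k}‖`.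
Here `σ` sorts the entries of `x̂` nonincreasingly in absolute value, so that
`r_m(x̂) = |x̂ (σ (m-1))|` (1-based `m`). -/
theorem rj_lower_bound_of_rapidly_decaying
    {d n : ℕ} (κ α β L α' : ℝ) (p : ℝ) (hp : 1 ≤ p)
    (xh : EuclideanSpace ℝ (Fin d)) (e : Fin n → ℝ)
    (σ : Equiv.Perm (Fin d))
    (hsort : ∀ i j : Fin d, i ≤ j → |xh (σ j)| ≤ |xh (σ i)|)
    (hκ0 : 0 < κ) (hκ1 : κ < 1)
    (hdecay : ∀ i : Fin d, ∀ h : (i : ℕ) + 1 < d, |xh (σ ⟨(i : ℕ) + 1, h⟩)| ≤ κ * |xh (σ i)|)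
    (k : ℕ) (hk1 : 1 ≤ k) (hkd : k ≤ d) (hk1d : k - 1 < d)
    (hrk : xh (σ ⟨k - 1, hk1d⟩) ≠ 0)
    (hα : 0 < α) (hβ : 0 < β) (hL : 0 < L)
    (hα'0 : 0 < α') (hα' : α' ≤ α - 2 * lpNorm p e / |xh (σ ⟨k - 1, hk1d⟩)|)
    (hκ : κ < α' / Real.sqrt (α' ^ 2 + (β + 2 * L) ^ 2))
    (j : ℕ) (hj1 : 1 ≤ j) (hjk : j ≤ k) (hj1d : j - 1 < d) :
    α * |xh (σ ⟨j - 1, hj1d⟩)| >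
      2 * lpNorm p e + 2 * L * ‖xh - trunc σ k xh‖ + β * ‖trunc σ j xh - trunc σ k xh‖ := by
  set rj := |xh (σ ⟨j - 1, hj1d⟩)| with hrjdef
  set rk := |xh (σ ⟨k - 1, hk1d⟩)| with hrkdef
  set E := lpNorm p e with hEdef
  have hrk0 : 0 < rk := abs_pos.mpr hrk
  have hrjk : rk ≤ rj := by
    apply hsort
    simp only [Fin.mk_le_mk]
    omega
  have hrj0 : 0 < rj := lt_of_lt_of_le hrk0 hrjk
  have hE0 : 0 ≤ E := by
    rw [hEdef]
    unfold lpNorm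
    positivity
  -- decay estimate
  have hdecaypow : ∀ s : ℕ, ∀ h : (j - 1) + s < d, |xh (σ ⟨(j - 1) + s, h⟩)| ≤ κ ^ s * rj := by
    intro s
    induction s with
    | zero => intro h; simp [hrjdef]
    | succ t ih =>
      intro h
      have ht : (j - 1) + t < d := by omega
      have h2 := hdecay ⟨(j - 1) + t, ht⟩ (by omega)
      calc |xh (σ ⟨(j - 1) + (t + 1), h⟩)| = |xh (σ ⟨((j - 1) + t) + 1, by omega⟩)| := by
            congr 1
        _ ≤ κ * |xh (σ ⟨(j - 1) + t, ht⟩)| := h2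
        _ ≤ κ * (κ ^ t * rj) := by
            have := ih ht
            nlinarith [abs_nonneg (xh (σ ⟨(j - 1) + t, ht⟩))]
        _ = κ ^ (t + 1) * rj := by ring
  set q := κ ^ 2 with hqdef
  have hq0 : 0 ≤ q := sq_nonneg κ
  have hq1 : q < 1 := by nlinarith
  set S := rj ^ 2 * (q / (1 - q)) with hSdef
  have hS0 : 0 ≤ S := by
    have : 0 ≤ q / (1 - q) := div_nonneg hq0 (by linarith)
    positivity
  -- tail sum bound
  set T := ∑ m : Fin d, (if j ≤ (m : ℕ) then (xh (σ m)) ^ 2 else 0) with hTdef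
  have hTS : T ≤ S := by
    have h1 : T ≤ ∑ m : Fin d, (if j ≤ (m : ℕ) then rj ^ 2 * q ^ ((m : ℕ) - (j - 1)) else 0) := by
      apply Finset.sum_le_sum
      intro m _
      by_cases hm : j ≤ (m : ℕ)
      · simp only [hm, if_true]
        have hms : (j - 1) + ((m : ℕ) - (j - 1)) < d := by omega
        have := hdecaypow ((m : ℕ) - (j - 1)) hms
        have heq : (⟨(j - 1) + ((m : ℕ) - (j - 1)), hms⟩ : Fin d) = m := by
          ext; simp; omega
        rw [heq] at this
        have h3 : (xh (σ m)) ^ 2 ≤ (κ ^ ((m : ℕ) - (j - 1)) * rj) ^ 2 := by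
          rw [← sq_abs]
          apply pow_le_pow_left₀ (abs_nonneg _) this
        calc (xh (σ m)) ^ 2 ≤ (κ ^ ((m : ℕ) - (j - 1)) * rj) ^ 2 := h3
          _ = rj ^ 2 * q ^ ((m : ℕ) - (j - 1)) := by
              rw [mul_pow, hqdef, ← pow_mul, ← pow_mul, Nat.mul_comm]
              ring
      · simp [hm]
    refine le_trans h1 ?_
    -- convert to a sum over range d
    have h2 : ∑ m : Fin d, (if j ≤ (m : ℕ) then rj ^ 2 * q ^ ((m : ℕ) - (j - 1)) else 0)
        = ∑ m ∈ Finset.range d, (if j ≤ m then rj ^ 2 * q ^ (m - (j - 1)) else 0) := by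
      rw [Finset.sum_range]
    rw [h2]
    have hjd : j ≤ d := le_trans hjk hkd
    have h3 : ∑ m ∈ Finset.range d, (if j ≤ m then rj ^ 2 * q ^ (m - (j - 1)) else 0)
        = ∑ m ∈ Finset.Ico j d, rj ^ 2 * q ^ (m - (j - 1)) := by
      rw [Finset.range_eq_Ico, ← Finset.sum_Ico_consecutive _ (Nat.zero_le j) hjd]
      rw [Finset.sum_congr rfl (fun m hm => if_neg (by simp at hm; omega)),
        Finset.sum_congr rfl (fun m hm => if_pos (by simp at hm; omega))]
      simp
    rw [h3, Finset.sum_Ico_eq_sum_range]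
    have h4 : ∀ m ∈ Finset.range (d - j), rj ^ 2 * q ^ (j + m - (j - 1)) = rj ^ 2 * q * q ^ m := by
      intro m _
      have : j + m - (j - 1) = m + 1 := by omega
      rw [this, pow_succ]
      ring
    rw [Finset.sum_congr rfl h4, ← Finset.mul_sum]
    have h5 := geom_aux hq0 hq1 (d - j)
    have hrjq : 0 ≤ rj ^ 2 * q := by positivity
    calc rj ^ 2 * q * ∑ m ∈ Finset.range (d - j), q ^ m
        ≤ rj ^ 2 * q * (1 / (1 - q)) := by
          apply mul_le_mul_of_nonneg_left h5 hrjq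
      _ = S := by rw [hSdef]; ring
  -- norms squared
  have hA2 : ‖xh - trunc σ k xh‖ ^ 2 = ∑ m : Fin d, (if k ≤ (m : ℕ) then (xh (σ m)) ^ 2 else 0) := by
    rw [EuclideanSpace.norm_eq, Real.sq_sqrt (by positivity)]
    rw [← Equiv.sum_comp σ (fun i => ‖(xh - trunc σ k xh) i‖ ^ 2)]
    apply Finset.sum_congr rfl
    intro m _
    simp only [PiLp.sub_apply, trunc, PiLp.toLp_apply, Equiv.symm_apply_apply, Real.norm_eq_abs, sq_abs]
    by_cases h : (m : ℕ) < k
    · simp [h, Nat.not_le.mpr h]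
    · simp [h, Nat.le_of_not_lt h]
  have hB2 : ‖trunc σ j xh - trunc σ k xh‖ ^ 2
      = ∑ m : Fin d, (if j ≤ (m : ℕ) ∧ (m : ℕ) < k then (xh (σ m)) ^ 2 else 0) := by
    rw [EuclideanSpace.norm_eq, Real.sq_sqrt (by positivity)]
    rw [← Equiv.sum_comp σ (fun i => ‖(trunc σ j xh - trunc σ k xh) i‖ ^ 2)]
    apply Finset.sum_congr rfl
    intro m _
    simp only [PiLp.sub_apply, trunc, PiLp.toLp_apply, Equiv.symm_apply_apply, Real.norm_eq_abs, sq_abs]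
    by_cases h1 : (m : ℕ) < j
    · have h2 : (m : ℕ) < k := lt_of_lt_of_le h1 hjk
      simp [h1, h2, Nat.not_le.mpr h1]
    · by_cases h2 : (m : ℕ) < k
      · simp [h1, h2, Nat.le_of_not_lt h1]
      · simp [h1, h2, Nat.not_le.mpr (Nat.lt_of_lt_of_le (by omega : j - 1 < j) hjk) ]
  have hA2T : ‖xh - trunc σ k xh‖ ^ 2 ≤ T := by
    rw [hA2, hTdef]
    apply Finset.sum_le_sum
    intro m _
    by_cases h : k ≤ (m : ℕ)
    · simp [h, le_trans hjk h]
    · simp only [h, if_false]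
      by_cases h2 : j ≤ (m : ℕ) <;> simp [h2] <;> positivity
  have hB2T : ‖trunc σ j xh - trunc σ k xh‖ ^ 2 ≤ T := by
    rw [hB2, hTdef]
    apply Finset.sum_le_sum
    intro m _
    by_cases h : j ≤ (m : ℕ) ∧ (m : ℕ) < k
    · simp [h, h.1]
    · simp only [h, if_false]
      by_cases h2 : j ≤ (m : ℕ) <;> simp [h2] <;> positivity
  set A := ‖xh - trunc σ k xh‖ with hAdef
  set B := ‖trunc σ j xh - trunc σ k xh‖ with hBdef
  have hA0 : 0 ≤ A := norm_nonneg _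
  have hB0 : 0 ≤ B := norm_nonneg _
  have hAle : A ≤ Real.sqrt S := Real.le_sqrt_of_sq_le (le_trans hA2T hTS)
  have hBle : B ≤ Real.sqrt S := Real.le_sqrt_of_sq_le (le_trans hB2T hTS)
  clear hA2 hB2 hA2T hB2T hTS hdecay hdecaypow hsort hrk hα hrjdef hrkdef hEdef hTdef hAdef hBdef
  clear_value A B E rj rk T
  clear T
  -- the κ condition
  set B' := β + 2 * L with hB'def
  have hB'0 : 0 < B' := by positivity
  have hs0 : 0 < Real.sqrt (α' ^ 2 + B' ^ 2) := Real.sqrt_pos.mpr (by positivity)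
  have hκs : κ * Real.sqrt (α' ^ 2 + B' ^ 2) < α' := (lt_div_iff₀ hs0).mp hκ
  have hκs2 : κ ^ 2 * (α' ^ 2 + B' ^ 2) < α' ^ 2 := by
    have h1 : (κ * Real.sqrt (α' ^ 2 + B' ^ 2)) ^ 2 < α' ^ 2 :=
      pow_lt_pow_left₀ hκs (by positivity) two_ne_zero
    rw [mul_pow, Real.sq_sqrt (by positivity)] at h1
    exact h1
  -- key: B'^2 * S < (α' * rj)^2
  have hkey : B' ^ 2 * S < (α' * rj) ^ 2 := by
    have h1 : q * B' ^ 2 < α' ^ 2 * (1 - q) := by rw [hqdef]; nlinarith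
    have h1q : (1 : ℝ) - q ≠ 0 := by linarith
    have h2 : S * (1 - q) = rj ^ 2 * q := by
      rw [hSdef]
      field_simp
    nlinarith [mul_lt_mul_of_pos_right h1 (by positivity : (0:ℝ) < rj ^ 2), sq_nonneg rj]
  have hsqrtS : Real.sqrt S ^ 2 = S := Real.sq_sqrt hS0
  have hmain : B' * Real.sqrt S < α' * rj := by
    apply lt_of_pow_lt_pow_left₀ 2 (by positivity)
    rw [mul_pow, hsqrtS]
    exact hkey
  have hstep : 2 * L * A + β * B < α' * rj := by
    have hsS : 0 ≤ Real.sqrt S := Real.sqrt_nonneg _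
    nlinarith
  -- final combination
  have hfin : α' * rj + 2 * E ≤ α * rj := by
    have h1 : α' * rk ≤ α * rk - 2 * E := by
      have := mul_le_mul_of_nonneg_right hα' hrk0.le
      rw [sub_mul, div_mul_cancel₀ _ (ne_of_gt hrk0)] at this
      linarith
    nlinarith [mul_nonneg (sub_nonneg.mpr hrjk) (by nlinarith : (0:ℝ) ≤ α - α')]
  linarith
end
end

section
/- Let F : ℝ^d → ℝ^{n×d}, b ∈ ℝ^n, α > 0, and define 𝒮_α(x) := argmin_{y ∈ ℝ^d} ‖F(x)y − b‖² + α‖y‖_{ℓ₁}. Assume: (i) ‖F(x)‖₂ ≤ c₁ for all x; (ii) for each x there is z_x with F(x)z_x = b and ‖z_x‖_{ℓ₁} ≤ c₂‖b‖; (iii) ‖F(x) − F(y)‖₂ ≤ c₃‖x − y‖ for all x, y; (iv) for all (4/α²)(c₁ + c₂ + c₁²c₂)²‖b‖²-sparse y and all x: (1−γ)‖y‖² ≤ ‖F(x)y‖² ≤ (1+γ)‖y‖²; (v) γ < 1 − (1 + 2c₁c₂)c₃‖b‖. Then 𝒮_α is a contraction with Lipschitz constant (2c₁c₂ + 1)c₃‖b‖/(1−γ)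 < 1 and satisfies ‖𝒮_α(x)‖ ≤ c₂‖b‖ for all x; consequently the fixed-point iteration x^{(j+1)} = 𝒮_α(x^{(j)}) converges from any initial point to a unique x_α satisfying x_α = argmin_y ‖F(x_α)y − b‖² + α‖y‖_{ℓ₁}. -/
noncomputable section
open scoped BigOperators
open Filter Topology

/-- The `ℓ₁` norm of a vector. -/
def l1Norm {d : ℕ} (x : EuclideanSpace ℝ (Fin d)) : ℝ := ∑ i, |x i|

/-- Number of nonzero entries of a vector. -/
def suppCard {d : ℕ} (x : EuclideanSpace ℝ (Fin d)) : ℕ :=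
  (Finset.univ.filter fun i => x i ≠ 0).card

set_option maxHeartbeats 1000000

namespace SoftThresholdAux

lemma l1Norm_nonneg {d : ℕ} (x : EuclideanSpace ℝ (Fin d)) : 0 ≤ l1Norm x :=
  Finset.sum_nonneg fun _ _ => abs_nonneg _

lemma norm_le_l1Norm {d : ℕ} (x : EuclideanSpace ℝ (Fin d)) : ‖x‖ ≤ l1Norm x := by
  rw [EuclideanSpace.norm_eq]
  have h1 : ∑ i, ‖x i‖ ^ 2 ≤ (∑ i, |x i|) ^ 2 := by
    have hstep : ∀ i ∈ Finset.univ, ‖x i‖ ^ 2 ≤ |x i| * ∑ j, |x j| := by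
      intro i _
      rw [Real.norm_eq_abs, sq]
      exact mul_le_mul_of_nonneg_left
        (Finset.single_le_sum (fun j _ => abs_nonneg (x j)) (Finset.mem_univ i)) (abs_nonneg _)
    calc ∑ i, ‖x i‖ ^ 2 ≤ ∑ i, |x i| * ∑ j, |x j| := Finset.sum_le_sum hstep
    _ = (∑ i, |x i|) ^ 2 := by rw [← Finset.sum_mul, sq]
  calc Real.sqrt (∑ i, ‖x i‖ ^ 2) ≤ Real.sqrt ((∑ i, |x i|) ^ 2) := Real.sqrt_le_sqrt h1
  _ = ∑ i, |x i| := Real.sqrt_sq (Finset.sum_nonneg fun i _ => abs_nonneg _)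

lemma aux_limit {A x y δ : ℝ} (hA : 0 ≤ A) (hδ : 0 < δ)
    (h : ∀ τ, 0 < τ → τ ≤ δ → x ≤ A * τ + y) : x ≤ y := by
  apply le_of_forall_pos_le_add
  intro ε hε
  have hτ : 0 < min δ (ε / (A + 1)) := lt_min hδ (by positivity)
  have h1 := h _ hτ (min_le_left _ _)
  have hA1 : (0:ℝ) < A + 1 := by linarith
  have h2 : A * min δ (ε / (A + 1)) ≤ ε := by
    have hm := mul_le_mul_of_nonneg_left (min_le_right δ (ε / (A + 1))) hA
    have h3 : A * (ε / (A + 1)) ≤ ε := by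
      rw [mul_div_assoc', div_le_iff₀ hA1]
      nlinarith
    linarith
  linarith

/-- One-dimensional KKT analysis of `t ↦ A t² − 2 c t + α |s + t|` minimized at `t = 0`. -/
lemma oneDim {A c s α : ℝ} (hA : 0 ≤ A) (hα : 0 < α)
    (h : ∀ t : ℝ, α * |s| ≤ A * t ^ 2 - 2 * c * t + α * |s + t|) :
    |c| ≤ α / 2 ∧ c * s = (α / 2) * |s| := by
  have P2 : |c| ≤ α / 2 := by
    have h1 : 2 * c ≤ α := by
      have key : ∀ τ, 0 < τ → τ ≤ 1 → 2 * c ≤ A * τ + α := by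
        intro τ hτ _
        have hb := h τ
        have habs : |s + τ| ≤ |s| + τ := by
          calc |s + τ| ≤ |s| + |τ| := abs_add_le _ _
          _ = |s| + τ := by rw [abs_of_pos hτ]
        nlinarith
      exact aux_limit hA one_pos key
    have h2 : -(2 * c) ≤ α := by
      have key : ∀ τ, 0 < τ → τ ≤ 1 → -(2 * c) ≤ A * τ + α := by
        intro τ hτ _
        have hb := h (-τ)
        have habs : |s + -τ| ≤ |s| + τ := by
          calc |s + -τ| ≤ |s| + |(-τ)| := abs_add_le _ _
          _ = |s| + τ := by rw [abs_neg, abs_of_pos hτ]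
        nlinarith
      exact aux_limit hA one_pos key
    rw [abs_le]; constructor <;> linarith
  refine ⟨P2, ?_⟩
  rcases lt_trichotomy s 0 with hs | hs | hs
  · have hc : α ≤ -(2 * c) := by
      apply aux_limit hA (neg_pos.mpr hs)
      intro τ hτ hτs
      have hb := h τ
      have habs : |s + τ| = |s| - τ := by
        rw [abs_of_neg hs, abs_of_nonpos (by linarith)]; ring
      rw [habs] at hb
      nlinarith
    have hceq : c = -(α / 2) := by
      have := abs_le.mp P2
      linarith
    rw [hceq, abs_of_neg hs]; ring
  · simp [hs]
  · have hc : α ≤ 2 * c := by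
      apply aux_limit hA hs
      intro τ hτ hτs
      have hb := h (-τ)
      have habs : |s + -τ| = |s| - τ := by
        rw [abs_of_pos hs, abs_of_nonneg (by linarith)]; ring
      rw [habs] at hb
      nlinarith
    have hceq : c = α / 2 := by
      have := abs_le.mp P2
      linarith
    rw [hceq, abs_of_pos hs]

lemma l1_update {d : ℕ} (u : EuclideanSpace ℝ (Fin d)) (i : Fin d) (t : ℝ) :
    l1Norm (u + t • EuclideanSpace.single i (1:ℝ)) = l1Norm u - |u i| + |u i + t| := by
  unfold l1Norm
  have key : ∀ v : EuclideanSpace ℝ (Fin d), ∑ j, |v j| = |v i| + ∑ j ∈ Finset.univ.erase i, |v j| :=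
    fun v => (Finset.add_sum_erase Finset.univ (fun j => |v j|) (Finset.mem_univ i)).symm
  rw [key (u + t • EuclideanSpace.single i (1:ℝ)), key u]
  have h1 : (u + t • EuclideanSpace.single i (1:ℝ)) i = u i + t := by
    simp [EuclideanSpace.single_apply]
  have h2 : ∀ j ∈ Finset.univ.erase i, |(u + t • EuclideanSpace.single i (1:ℝ)) j| = |u j| := by
    intro j hj
    have hji : j ≠ i := Finset.ne_of_mem_erase hj
    simp [EuclideanSpace.single_apply, hji]
  rw [h1, Finset.sum_congr rfl h2]
  ring

lemma base_ineq {d n : ℕ} (A : EuclideanSpace ℝ (Fin d) →L[ℝ] EuclideanSpace ℝ (Fin n))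
    (b : EuclideanSpace ℝ (Fin n)) (α : ℝ) (u : EuclideanSpace ℝ (Fin d))
    (hu : ∀ y, ‖A u - b‖ ^ 2 + α * l1Norm u ≤ ‖A y - b‖ ^ 2 + α * l1Norm y) (i : Fin d) (t : ℝ) :
    α * |u i| ≤ ‖A (EuclideanSpace.single i (1:ℝ))‖ ^ 2 * t ^ 2
      - 2 * (inner ℝ (b - A u) (A (EuclideanSpace.single i (1:ℝ))) : ℝ) * t + α * |u i + t| := by
  set e := EuclideanSpace.single i (1:ℝ)
  have h := hu (u + t • e)
  have hmap : A (u + t • e) - b = (A u - b) + t • A e := by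
    rw [map_add, map_smul]; abel
  have hnorm : ‖A (u + t • e) - b‖ ^ 2
      = ‖A u - b‖ ^ 2 + 2 * t * (inner ℝ (A u - b) (A e) : ℝ) + t ^ 2 * ‖A e‖ ^ 2 := by
    rw [hmap, norm_add_sq_real, real_inner_smul_right, norm_smul]
    simp [mul_pow, sq_abs]
    ring
  rw [hnorm, l1_update u i t] at h
  have hinner : (inner ℝ (b - A u) (A e) : ℝ) = -(inner ℝ (A u - b) (A e) : ℝ) := by
    rw [← inner_neg_left]
    congr 1
    abel
  rw [hinner]
  nlinarith [h]

lemma decomp {d : ℕ} (w : EuclideanSpace ℝ (Fin d)) :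
    w = ∑ i, w i • EuclideanSpace.single i (1:ℝ) := by
  ext j
  rw [show (∑ i, w i • EuclideanSpace.single i (1:ℝ)) j
      = ∑ i, (w i • EuclideanSpace.single i (1:ℝ)) j from
    map_sum (PiLp.proj 2 (𝕜 := ℝ) (fun _ : Fin d => ℝ) j) _ _]
  simp [EuclideanSpace.single_apply]

lemma inner_repr {d n : ℕ} (A : EuclideanSpace ℝ (Fin d) →L[ℝ] EuclideanSpace ℝ (Fin n))
    (v : EuclideanSpace ℝ (Fin n)) (w : EuclideanSpace ℝ (Fin d)) :
    (inner ℝ v (A w) : ℝ) = ∑ i, (inner ℝ v (A (EuclideanSpace.single i (1:ℝ))) : ℝ) * w i := by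
  conv_lhs => rw [decomp w, map_sum, inner_sum]
  refine Finset.sum_congr rfl fun i _ => ?_
  rw [map_smul, real_inner_smul_right]
  ring

lemma sum_sq_inner {d n : ℕ} (A : EuclideanSpace ℝ (Fin d) →L[ℝ] EuclideanSpace ℝ (Fin n))
    (v : EuclideanSpace ℝ (Fin n)) :
    ∑ i, (inner ℝ v (A (EuclideanSpace.single i (1:ℝ))) : ℝ) ^ 2 ≤ ‖A‖ ^ 2 * ‖v‖ ^ 2 := by
  have key : ∀ i, (inner ℝ v (A (EuclideanSpace.single i (1:ℝ))) : ℝ)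
      = ContinuousLinearMap.adjoint A v i := by
    intro i
    rw [← ContinuousLinearMap.adjoint_inner_left]
    simp [EuclideanSpace.inner_single_right]
  have h1 : ∑ i, (inner ℝ v (A (EuclideanSpace.single i (1:ℝ))) : ℝ) ^ 2
      = ‖ContinuousLinearMap.adjoint A v‖ ^ 2 := by
    rw [← real_inner_self_eq_norm_sq, PiLp.inner_apply]
    refine Finset.sum_congr rfl fun i _ => ?_
    rw [key i]
    simp [sq]
  rw [h1]
  have h2 : ‖ContinuousLinearMap.adjoint A v‖ ≤ ‖A‖ * ‖v‖ := by
    calc ‖ContinuousLinearMap.adjoint A v‖ ≤ ‖ContinuousLinearMap.adjoint A‖ * ‖v‖ :=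
      (ContinuousLinearMap.adjoint A).le_opNorm v
    _ = ‖A‖ * ‖v‖ := by rw [ContinuousLinearMap.adjoint.norm_map A]
  calc ‖ContinuousLinearMap.adjoint A v‖ ^ 2 ≤ (‖A‖ * ‖v‖) ^ 2 :=
        pow_le_pow_left₀ (norm_nonneg _) h2 2
  _ = ‖A‖ ^ 2 * ‖v‖ ^ 2 := by ring

end SoftThresholdAux

open SoftThresholdAux

/-- Theorem 4.3 of the paper: under conditions (i)–(v), the map
`𝒮_α(x) = argmin_y ‖F(x)y − b‖² + α‖y‖₁` is a bounded contraction with Lipschitz constant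
`(2c₁c₂+1)c₃‖b‖/(1−γ) < 1`, hence the fixed-point iteration `x^{(j+1)} = 𝒮_α(x^{(j)})`
converges from any initial point to the unique `x_α` with
`x_α = argmin_y ‖F(x_α)y − b‖² + α‖y‖₁`. -/
theorem soft_thresholding_contraction
    {d n : ℕ}
    (F : EuclideanSpace ℝ (Fin d) → (EuclideanSpace ℝ (Fin d) →L[ℝ] EuclideanSpace ℝ (Fin n)))
    (b : EuclideanSpace ℝ (Fin n)) (α : ℝ) (hα : 0 < α)
    (c₁ c₂ c₃ γ : ℝ) (hc₁ : 0 < c₁) (hc₂ : 0 < c₂) (hc₃ : 0 < c₃) (hγ : 0 < γ)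
    -- 𝒮_α, a choice of minimizer
    (S : EuclideanSpace ℝ (Fin d) → EuclideanSpace ℝ (Fin d))
    (hS : ∀ x y : EuclideanSpace ℝ (Fin d),
      ‖F x (S x) - b‖ ^ 2 + α * l1Norm (S x) ≤ ‖F x y - b‖ ^ 2 + α * l1Norm y)
    -- (i) uniform bound on the operator norms
    (h1 : ∀ x, ‖F x‖ ≤ c₁)
    -- (ii) feasible points with controlled ℓ₁ norm
    (h2 : ∀ x, ∃ z : EuclideanSpace ℝ (Fin d), F x z = b ∧ l1Norm z ≤ c₂ * ‖b‖)
    -- (iii) Lipschitz continuity of F in spectral norm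
    (h3 : ∀ x y, ‖F x - F y‖ ≤ c₃ * ‖x - y‖)
    -- (iv) restricted isometry on sufficiently sparse vectors
    (h4 : ∀ x y : EuclideanSpace ℝ (Fin d),
      (suppCard y : ℝ) ≤ (4 / α ^ 2) * (c₁ + c₂ + c₁ ^ 2 * c₂) ^ 2 * ‖b‖ ^ 2 →
      (1 - γ) * ‖y‖ ^ 2 ≤ ‖F x y‖ ^ 2 ∧ ‖F x y‖ ^ 2 ≤ (1 + γ) * ‖y‖ ^ 2)
    -- (v) smallness condition
    (h5 : γ < 1 - (1 + 2 * c₁ * c₂) * c₃ * ‖b‖) :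
    (∀ x, ‖S x‖ ≤ c₂ * ‖b‖) ∧
    (∀ x y, ‖S x - S y‖ ≤ ((2 * c₁ * c₂ + 1) * c₃ * ‖b‖ / (1 - γ)) * ‖x - y‖) ∧
    (2 * c₁ * c₂ + 1) * c₃ * ‖b‖ / (1 - γ) < 1 ∧
    (∃! xα : EuclideanSpace ℝ (Fin d), S xα = xα) ∧
    (∃ xα : EuclideanSpace ℝ (Fin d), S xα = xα ∧
      (∀ x₀, Tendsto (fun j => S^[j] x₀) atTop (𝓝 xα)) ∧
      (∀ y, ‖F xα xα - b‖ ^ 2 + α * l1Norm xα ≤ ‖F xα y - b‖ ^ 2 + α * l1Norm y)) := by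
  -- the "dual certificate" coordinates
  set c : EuclideanSpace ℝ (Fin d) → Fin d → ℝ :=
    fun x i => (inner ℝ (b - F x (S x)) (F x (EuclideanSpace.single i (1:ℝ))) : ℝ) with hc
  -- KKT conditions
  have hKKT : ∀ x i, |c x i| ≤ α / 2 ∧ c x i * S x i = (α / 2) * |S x i| := by
    intro x i
    exact oneDim (sq_nonneg _) hα (base_ineq (F x) b α (S x) (hS x) i)
  -- ℓ¹ bound
  have hl1 : ∀ x, l1Norm (S x) ≤ c₂ * ‖b‖ := by
    intro x
    obtain ⟨z, hz1, hz2⟩ := h2 x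
    have h := hS x z
    rw [hz1, sub_self, norm_zero] at h
    have h0 : (0:ℝ) ≤ ‖F x (S x) - b‖ ^ 2 := sq_nonneg _
    have : α * l1Norm (S x) ≤ α * l1Norm z := by nlinarith
    have hle := le_of_mul_le_mul_left (by linarith : α * l1Norm (S x) ≤ α * l1Norm z) hα
    linarith
  have hnormS : ∀ x, ‖S x‖ ≤ c₂ * ‖b‖ := fun x => (norm_le_l1Norm (S x)).trans (hl1 x)
  -- residual bounds
  have hresα : ∀ x, ‖F x (S x) - b‖ ^ 2 ≤ α * (c₂ * ‖b‖) := by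
    intro x
    obtain ⟨z, hz1, hz2⟩ := h2 x
    have h := hS x z
    rw [hz1, sub_self, norm_zero] at h
    have := l1Norm_nonneg (S x)
    nlinarith
  have hresb : ∀ x, ‖F x (S x) - b‖ ^ 2 + α * l1Norm (S x) ≤ ‖b‖ ^ 2 := by
    intro x
    have h := hS x 0
    have hz : F x (0 : EuclideanSpace ℝ (Fin d)) - b = -b := by rw [map_zero]; abel
    have hl0 : l1Norm (0 : EuclideanSpace ℝ (Fin d)) = 0 := by
      simp [l1Norm]
    rw [hz, norm_neg, hl0, mul_zero, add_zero] at h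
    exact h
  -- operator bound on basis vectors
  have hFe : ∀ x i, ‖F x (EuclideanSpace.single i (1:ℝ))‖ ≤ c₁ := by
    intro x i
    calc ‖F x (EuclideanSpace.single i (1:ℝ))‖ ≤ ‖F x‖ * ‖EuclideanSpace.single i (1:ℝ)‖ :=
          (F x).le_opNorm _
    _ = ‖F x‖ := by rw [EuclideanSpace.norm_single]; simp
    _ ≤ c₁ := h1 x
  -- large α forces S x = 0
  have hzero : ∀ x, 2 * c₁ * ‖b‖ ≤ α → S x = 0 := by
    intro x hx
    by_contra hne
    obtain ⟨i, hi⟩ : ∃ i, S x i ≠ 0 := by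
      by_contra hforall
      push_neg at hforall
      exact hne (by ext j; simp [hforall j])
    obtain ⟨hP2, hP1⟩ := hKKT x i
    have habs : 0 < |S x i| := abs_pos.mpr hi
    have hge : α / 2 ≤ |c x i| := by
      have : (α / 2) * |S x i| = c x i * S x i := hP1.symm
      have hub : c x i * S x i ≤ |c x i| * |S x i| := by
        calc c x i * S x i ≤ |c x i * S x i| := le_abs_self _
        _ = |c x i| * |S x i| := abs_mul _ _
      nlinarith
    have hl1pos : 0 < l1Norm (S x) := by
      have := Finset.single_le_sum (f := fun j => |S x j|) (fun j _ => abs_nonneg _)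
        (Finset.mem_univ i)
      unfold l1Norm
      linarith
    have hres : ‖F x (S x) - b‖ ^ 2 < ‖b‖ ^ 2 := by
      have := hresb x
      nlinarith
    have hrlt : ‖F x (S x) - b‖ < ‖b‖ :=
      lt_of_pow_lt_pow_left₀ 2 (norm_nonneg _) hres
    have hcb : |c x i| ≤ ‖F x (S x) - b‖ * c₁ := by
      have hCS : |c x i| ≤ ‖b - F x (S x)‖ * ‖F x (EuclideanSpace.single i (1:ℝ))‖ :=
        abs_real_inner_le_norm _ _
      have hrev : ‖b - F x (S x)‖ = ‖F x (S x) - b‖ := norm_sub_rev _ _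
      rw [hrev] at hCS
      calc |c x i| ≤ ‖F x (S x) - b‖ * ‖F x (EuclideanSpace.single i (1:ℝ))‖ := hCS
      _ ≤ ‖F x (S x) - b‖ * c₁ :=
        mul_le_mul_of_nonneg_left (hFe x i) (norm_nonneg _)
    nlinarith [norm_nonneg (F x (S x) - b)]
  -- support bound
  have hsupp : ∀ x, (suppCard (S x) : ℝ) * (α / 2) ^ 2 ≤ c₁ ^ 2 * ‖F x (S x) - b‖ ^ 2 := by
    intro x
    have hsum : (suppCard (S x) : ℝ) * (α / 2) ^ 2 ≤ ∑ i, (c x i) ^ 2 := by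
      have hfil : (suppCard (S x) : ℝ) * (α / 2) ^ 2
          = ∑ i ∈ Finset.univ.filter fun i => S x i ≠ 0, (α / 2) ^ 2 := by
        rw [Finset.sum_const, suppCard, nsmul_eq_mul]
      rw [hfil]
      have hsub : ∑ i ∈ Finset.univ.filter fun i => S x i ≠ 0, (α / 2) ^ 2
          ≤ ∑ i ∈ Finset.univ.filter fun i => S x i ≠ 0, (c x i) ^ 2 := by
        apply Finset.sum_le_sum
        intro i hi
        have hi' : S x i ≠ 0 := (Finset.mem_filter.mp hi).2
        obtain ⟨hP2, hP1⟩ := hKKT x i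
        have habs : 0 < |S x i| := abs_pos.mpr hi'
        have hge : α / 2 ≤ |c x i| := by
          have hub : c x i * S x i ≤ |c x i| * |S x i| := by
            calc c x i * S x i ≤ |c x i * S x i| := le_abs_self _
            _ = |c x i| * |S x i| := abs_mul _ _
          nlinarith
        calc (α / 2) ^ 2 ≤ |c x i| ^ 2 := by
              apply pow_le_pow_left₀ (by positivity) hge
        _ = (c x i) ^ 2 := sq_abs _
      refine hsub.trans ?_
      apply Finset.sum_le_sum_of_subset_of_nonneg (Finset.filter_subset _ _)
      intro i _ _
      positivity
    refine hsum.trans ?_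
    have := sum_sq_inner (F x) (b - F x (S x))
    have hrev : ‖b - F x (S x)‖ = ‖F x (S x) - b‖ := norm_sub_rev _ _
    rw [hrev] at this
    have hF2 : ‖F x‖ ^ 2 ≤ c₁ ^ 2 := pow_le_pow_left₀ (norm_nonneg _) (h1 x) 2
    have hv2 : (0:ℝ) ≤ ‖F x (S x) - b‖ ^ 2 := sq_nonneg _
    calc ∑ i, (c x i) ^ 2 ≤ ‖F x‖ ^ 2 * ‖F x (S x) - b‖ ^ 2 := this
    _ ≤ c₁ ^ 2 * ‖F x (S x) - b‖ ^ 2 := by nlinarith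
  -- sparsity of the difference
  have hwsupp : ∀ x y, (suppCard (S x - S y) : ℝ)
      ≤ 4 / α ^ 2 * (c₁ + c₂ + c₁ ^ 2 * c₂) ^ 2 * ‖b‖ ^ 2 := by
    intro x y
    rcases le_or_gt (2 * c₁ * ‖b‖) α with hcase | hcase
    · rw [hzero x hcase, hzero y hcase]
      have : suppCard ((0 : EuclideanSpace ℝ (Fin d)) - 0) = 0 := by
        simp [suppCard]
      rw [this]
      push_cast
      positivity
    · have hb0 : 0 < ‖b‖ := by nlinarith
      have hcard : (suppCard (S x - S y) : ℝ) ≤ (suppCard (S x) : ℝ) + (suppCard (S y) : ℝ) := by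
        have hsubset : (Finset.univ.filter fun i => (S x - S y) i ≠ 0)
            ⊆ (Finset.univ.filter fun i => S x i ≠ 0) ∪ (Finset.univ.filter fun i => S y i ≠ 0) := by
          intro i hi
          have hi' : (S x - S y) i ≠ 0 := (Finset.mem_filter.mp hi).2
          have : S x i - S y i ≠ 0 := by
            simpa [PiLp.sub_apply] using hi'
          rcases ne_or_eq (S x i) 0 with h | h
          · exact Finset.mem_union_left _ (Finset.mem_filter.mpr ⟨Finset.mem_univ _, h⟩)
          · have : S y i ≠ 0 := by intro hy; apply this; rw [h, hy, sub_zero]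
            exact Finset.mem_union_right _ (Finset.mem_filter.mpr ⟨Finset.mem_univ _, this⟩)
        have := (Finset.card_le_card hsubset).trans (Finset.card_union_le _ _)
        unfold suppCard
        exact_mod_cast this
      have hbx : (suppCard (S x) : ℝ) * α ^ 2 ≤ 4 * c₁ ^ 2 * (α * (c₂ * ‖b‖)) := by
        have := (hsupp x).trans (mul_le_mul_of_nonneg_left (hresα x) (by positivity))
        nlinarith
      have hby : (suppCard (S y) : ℝ) * α ^ 2 ≤ 4 * c₁ ^ 2 * (α * (c₂ * ‖b‖)) := by
        have := (hsupp y).trans (mul_le_mul_of_nonneg_left (hresα y) (by positivity))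
        nlinarith
      have hrw : 4 / α ^ 2 * (c₁ + c₂ + c₁ ^ 2 * c₂) ^ 2 * ‖b‖ ^ 2
          = 4 * (c₁ + c₂ + c₁ ^ 2 * c₂) ^ 2 * ‖b‖ ^ 2 / α ^ 2 := by ring
      rw [hrw, le_div_iff₀ (by positivity)]
      have e1 : 8 * c₁ ^ 2 * c₂ * α * ‖b‖ ≤ 16 * c₁ ^ 3 * c₂ * ‖b‖ ^ 2 := by
        nlinarith [mul_pos (mul_pos (mul_pos hc₁ hc₁) hc₂) hb0]
      have e2 : 16 * c₁ ^ 3 * c₂ ≤ 4 * (c₁ + c₂ + c₁ ^ 2 * c₂) ^ 2 := by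
        nlinarith [sq_nonneg (c₁ - c₁ ^ 2 * c₂), sq_nonneg c₂, mul_pos hc₁ hc₂,
          sq_nonneg (c₁ * c₂)]
      have e3 : 16 * c₁ ^ 3 * c₂ * ‖b‖ ^ 2 ≤ 4 * (c₁ + c₂ + c₁ ^ 2 * c₂) ^ 2 * ‖b‖ ^ 2 :=
        mul_le_mul_of_nonneg_right e2 (sq_nonneg _)
      have e4 := mul_le_mul_of_nonneg_right hcard (sq_nonneg α)
      nlinarith [e4]
  -- the contraction estimate
  have hLipRaw : ∀ x y, (1 - γ) * ‖S x - S y‖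
      ≤ (2 * c₁ * c₂ + 1) * c₃ * ‖b‖ * ‖x - y‖ := by
    intro x y
    set w := S x - S y with hwdef
    -- monotonicity of the subdifferential
    have hmono : 0 ≤ (inner ℝ (b - F x (S x)) (F x w) : ℝ) - (inner ℝ (b - F y (S y)) (F y w) : ℝ) := by
      rw [inner_repr (F x) _ w, inner_repr (F y) _ w]
      rw [← Finset.sum_sub_distrib]
      apply Finset.sum_nonneg
      intro i _
      have hwi : w i = S x i - S y i := by simp [hwdef]
      obtain ⟨hPx2, hPx1⟩ := hKKT x i
      obtain ⟨hPy2, hPy1⟩ := hKKT y i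
      have hub1 : c x i * S y i ≤ (α / 2) * |S y i| := by
        calc c x i * S y i ≤ |c x i * S y i| := le_abs_self _
        _ = |c x i| * |S y i| := abs_mul _ _
        _ ≤ (α / 2) * |S y i| := mul_le_mul_of_nonneg_right hPx2 (abs_nonneg _)
      have hub2 : c y i * S x i ≤ (α / 2) * |S x i| := by
        calc c y i * S x i ≤ |c y i * S x i| := le_abs_self _
        _ = |c y i| * |S x i| := abs_mul _ _
        _ ≤ (α / 2) * |S x i| := mul_le_mul_of_nonneg_right hPy2 (abs_nonneg _)
      rw [hwi]
      nlinarith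
    -- algebraic identity
    have hFxw : F x (S x) = F x w + F x (S y) := by
      rw [hwdef, map_sub]; abel
    have hid : (inner ℝ (b - F x (S x)) (F x w) : ℝ) - (inner ℝ (b - F y (S y)) (F y w) : ℝ)
        = (inner ℝ b ((F x - F y) w) : ℝ) - ‖F x w‖ ^ 2
          + (inner ℝ ((F y - F x) (S y)) (F y w) : ℝ)
          + (inner ℝ (F x (S y)) ((F y - F x) w) : ℝ) := by
      rw [hFxw]
      simp only [ContinuousLinearMap.sub_apply, inner_sub_left, inner_sub_right, inner_add_left,
        inner_add_right, real_inner_self_eq_norm_sq]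
      ring
    -- norm bounds
    have hGw : ‖(F x - F y) w‖ ≤ c₃ * ‖x - y‖ * ‖w‖ := by
      calc ‖(F x - F y) w‖ ≤ ‖F x - F y‖ * ‖w‖ := (F x - F y).le_opNorm w
      _ ≤ c₃ * ‖x - y‖ * ‖w‖ := mul_le_mul_of_nonneg_right (h3 x y) (norm_nonneg _)
    have hyx : ‖F y - F x‖ ≤ c₃ * ‖x - y‖ := by
      rw [show F y - F x = -(F x - F y) by abel, norm_neg]
      exact h3 x y
    have hGSy : ‖(F y - F x) (S y)‖ ≤ c₃ * ‖x - y‖ * (c₂ * ‖b‖) := by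
      calc ‖(F y - F x) (S y)‖ ≤ ‖F y - F x‖ * ‖S y‖ := (F y - F x).le_opNorm _
      _ ≤ (c₃ * ‖x - y‖) * (c₂ * ‖b‖) := by
          apply mul_le_mul hyx (hnormS y) (norm_nonneg _) (by positivity)
    have hGw' : ‖(F y - F x) w‖ ≤ c₃ * ‖x - y‖ * ‖w‖ := by
      calc ‖(F y - F x) w‖ ≤ ‖F y - F x‖ * ‖w‖ := (F y - F x).le_opNorm w
      _ ≤ c₃ * ‖x - y‖ * ‖w‖ := mul_le_mul_of_nonneg_right hyx (norm_nonneg _)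
    have hFyw : ‖F y w‖ ≤ c₁ * ‖w‖ := by
      calc ‖F y w‖ ≤ ‖F y‖ * ‖w‖ := (F y).le_opNorm w
      _ ≤ c₁ * ‖w‖ := mul_le_mul_of_nonneg_right (h1 y) (norm_nonneg _)
    have hFxSy : ‖F x (S y)‖ ≤ c₁ * (c₂ * ‖b‖) := by
      calc ‖F x (S y)‖ ≤ ‖F x‖ * ‖S y‖ := (F x).le_opNorm _
      _ ≤ c₁ * (c₂ * ‖b‖) := mul_le_mul (h1 x) (hnormS y) (norm_nonneg _) hc₁.le
    -- RIP lower bound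
    have hRIP : (1 - γ) * ‖w‖ ^ 2 ≤ ‖F x w‖ ^ 2 := (h4 x w (hwsupp x y)).1
    -- inner product bounds
    have hI1 : (inner ℝ b ((F x - F y) w) : ℝ) ≤ ‖b‖ * (c₃ * ‖x - y‖ * ‖w‖) := by
      calc (inner ℝ b ((F x - F y) w) : ℝ) ≤ ‖b‖ * ‖(F x - F y) w‖ := real_inner_le_norm _ _
      _ ≤ ‖b‖ * (c₃ * ‖x - y‖ * ‖w‖) := mul_le_mul_of_nonneg_left hGw (norm_nonneg _)
    have hI2 : (inner ℝ ((F y - F x) (S y)) (F y w) : ℝ)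
        ≤ (c₃ * ‖x - y‖ * (c₂ * ‖b‖)) * (c₁ * ‖w‖) := by
      calc (inner ℝ ((F y - F x) (S y)) (F y w) : ℝ) ≤ ‖(F y - F x) (S y)‖ * ‖F y w‖ :=
            real_inner_le_norm _ _
      _ ≤ (c₃ * ‖x - y‖ * (c₂ * ‖b‖)) * (c₁ * ‖w‖) :=
            mul_le_mul hGSy hFyw (norm_nonneg _) (by positivity)
    have hI3 : (inner ℝ (F x (S y)) ((F y - F x) w) : ℝ)
        ≤ (c₁ * (c₂ * ‖b‖)) * (c₃ * ‖x - y‖ * ‖w‖) := by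
      calc (inner ℝ (F x (S y)) ((F y - F x) w) : ℝ) ≤ ‖F x (S y)‖ * ‖(F y - F x) w‖ :=
            real_inner_le_norm _ _
      _ ≤ (c₁ * (c₂ * ‖b‖)) * (c₃ * ‖x - y‖ * ‖w‖) :=
            mul_le_mul hFxSy hGw' (norm_nonneg _) (by positivity)
    -- combine
    have hcomb : (1 - γ) * ‖w‖ ^ 2 ≤ (2 * c₁ * c₂ + 1) * c₃ * ‖b‖ * ‖x - y‖ * ‖w‖ := by
      have := hmono
      rw [hid] at this
      nlinarith [hRIP, hI1, hI2, hI3]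
    rcases eq_or_lt_of_le (norm_nonneg w) with hw0 | hw0
    · rw [← hw0, mul_zero]
      positivity
    · have := (mul_le_mul_iff_of_pos_right hw0).mp (by nlinarith [hcomb] : ((1 - γ) * ‖w‖) * ‖w‖ ≤ ((2 * c₁ * c₂ + 1) * c₃ * ‖b‖ * ‖x - y‖) * ‖w‖)
      linarith
  -- basic positivity facts
  have hcb0 : 0 ≤ (1 + 2 * c₁ * c₂) * c₃ * ‖b‖ := by positivity
  have h1γ : 0 < 1 - γ := by nlinarith
  set L : ℝ := (2 * c₁ * c₂ + 1) * c₃ * ‖b‖ / (1 - γ) with hLdef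
  have hL0 : 0 ≤ L := div_nonneg (by positivity) h1γ.le
  have hL1 : L < 1 := by
    rw [hLdef, div_lt_one h1γ]
    nlinarith
  have hLip : ∀ x y, ‖S x - S y‖ ≤ L * ‖x - y‖ := by
    intro x y
    rw [hLdef, div_mul_eq_mul_div, le_div_iff₀ h1γ]
    nlinarith [hLipRaw x y]
  -- contraction
  have hlipW : LipschitzWith (Real.toNNReal L) S := by
    apply LipschitzWith.of_dist_le_mul
    intro x y
    rw [dist_eq_norm, dist_eq_norm, Real.coe_toNNReal _ hL0]
    exact hLip x y
  have hKlt : Real.toNNReal L < 1 := by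
    exact (Real.toNNReal_lt_one).mpr hL1
  have hC : ContractingWith (Real.toNNReal L) S := ⟨hKlt, hlipW⟩
  have hfix : S (ContractingWith.fixedPoint S hC) = ContractingWith.fixedPoint S hC :=
    hC.fixedPoint_isFixedPt
  refine ⟨hnormS, hLip, hL1, ?_, ?_⟩
  · exact ⟨ContractingWith.fixedPoint S hC, hfix, fun y hy => hC.fixedPoint_unique hy⟩
  · refine ⟨ContractingWith.fixedPoint S hC, hfix, fun x₀ => hC.tendsto_iterate_fixedPoint x₀, ?_⟩
    intro y
    have := hS (ContractingWith.fixedPoint S hC) y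
    rwa [hfix] at this
end
end

section
/- Under the assumptions of the convergence theorem for quasi-linear iterative soft-thresholding (fixed point x_α), assume further there is a K-sparse minimizer x̂_α of 𝒥_α(x) = ‖F(x)x − b‖² + α‖x‖_{ℓ₁}, and (c₂c₃/√(1−γ̃))‖b‖ < 1. Then ‖x_α − x̂_α‖₂ ≤ √(α c₂‖b‖)/a + ((c₁ + c₃‖x̂‖)/a)‖x̂_α − x̂‖₂, where x̂ satisfies F(x̂)x̂ = b and a = √(1−γ̃) − c₂c₃‖b‖ > 0. -/
noncomputable section
open scoped BigOperators

lemma l1Norm_nonneg {d : ℕ} (x : EuclideanSpace ℝ (Fin d)) : 0 ≤ l1Norm x :=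
  Finset.sum_nonneg fun i _ => abs_nonneg _

lemma norm_le_l1Norm {d : ℕ} (x : EuclideanSpace ℝ (Fin d)) : ‖x‖ ≤ l1Norm x := by
  rw [EuclideanSpace.norm_eq]
  have h1 : ∑ i, ‖x i‖ ^ 2 ≤ (l1Norm x) ^ 2 := by
    have : (l1Norm x) ^ 2 = ∑ i, |x i| * l1Norm x := by
      simp only [l1Norm, sq, Finset.sum_mul]
    rw [this]
    apply Finset.sum_le_sum
    intro i _
    have hle : |x i| ≤ l1Norm x :=
      Finset.single_le_sum (fun j _ => abs_nonneg (x j)) (Finset.mem_univ i)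
    have : ‖x i‖ = |x i| := rfl
    rw [this, sq]
    exact mul_le_mul_of_nonneg_left hle (abs_nonneg _)
  calc Real.sqrt (∑ i, ‖x i‖ ^ 2) ≤ Real.sqrt ((l1Norm x) ^ 2) := Real.sqrt_le_sqrt h1
    _ = l1Norm x := Real.sqrt_sq (l1Norm_nonneg x)

lemma suppCard_sub_le {d : ℕ} (x y : EuclideanSpace ℝ (Fin d)) :
    suppCard (x - y) ≤ suppCard x + suppCard y := by
  classical
  unfold suppCard
  have hsub : (Finset.univ.filter fun i => (x - y) i ≠ 0) ⊆
      (Finset.univ.filter fun i => x i ≠ 0) ∪ (Finset.univ.filter fun i => y i ≠ 0) := by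
    intro i hi
    simp only [Finset.mem_filter, Finset.mem_univ, true_and, Finset.mem_union] at hi ⊢
    by_contra hc
    push_neg at hc
    have : (x - y) i = x i - y i := rfl
    rw [this, hc.1, hc.2, sub_zero] at hi
    exact hi rfl
  calc (Finset.univ.filter fun i => (x - y) i ≠ 0).card
      ≤ ((Finset.univ.filter fun i => x i ≠ 0) ∪ (Finset.univ.filter fun i => y i ≠ 0)).card :=
        Finset.card_le_card hsub
    _ ≤ _ := Finset.card_union_le _ _

/-- Theorem 4.6 of the paper: the fixed point `x_α` of quasi-linear iterative
soft-thresholding is close to a `K`-sparse minimizer `x̂_α` of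
`𝒥_α(x) = ‖F(x)x − b‖² + α‖x‖₁`:
`‖x_α − x̂_α‖ ≤ √(αc₂‖b‖)/a + ((c₁ + c₃‖x̂‖)/a)‖x̂_α − x̂‖`,
where `F(x̂)x̂ = b` and `a = √(1−γ̃) − c₂c₃‖b‖ > 0`. -/
theorem fixed_point_close_to_minimizer
    {d n : ℕ}
    (F : EuclideanSpace ℝ (Fin d) → (EuclideanSpace ℝ (Fin d) →L[ℝ] EuclideanSpace ℝ (Fin n)))
    (b : EuclideanSpace ℝ (Fin n)) (α : ℝ) (hα : 0 < α)
    (c₁ c₂ c₃ : ℝ) (hc₁ : 0 < c₁) (hc₂ : 0 < c₂) (hc₃ : 0 < c₃)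
    (γ' : ℝ) (hγ'0 : 0 < γ') (hγ'1 : γ' < 1)
    -- constants for F as in the soft-thresholding theorems
    (h1 : ∀ x, ‖F x‖ ≤ c₁)
    (h2 : ∀ x, ∃ z : EuclideanSpace ℝ (Fin d), F x z = b ∧ l1Norm z ≤ c₂ * ‖b‖)
    (h3 : ∀ x y, ‖F x - F y‖ ≤ c₃ * ‖x - y‖)
    -- the k-sparse fixed point x_α
    (k : ℕ) (K : ℝ) (xα : EuclideanSpace ℝ (Fin d)) (hxα_sparse : suppCard xα ≤ k)
    (hxα_fix : ∀ y, ‖F xα xα - b‖ ^ 2 + α * l1Norm xα ≤ ‖F xα y - b‖ ^ 2 + α * l1Norm y)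
    -- restricted isometry lower bound at x_α on (K+k)-sparse vectors
    (ha : ∀ y : EuclideanSpace ℝ (Fin d), (suppCard y : ℝ) ≤ K + k →
      (1 - γ') * ‖y‖ ^ 2 ≤ ‖F xα y‖ ^ 2)
    -- a K-sparse minimizer x̂_α of 𝒥_α
    (xhα : EuclideanSpace ℝ (Fin d)) (hxhα_sparse : (suppCard xhα : ℝ) ≤ K)
    (hxhα_min : ∀ y, ‖F xhα xhα - b‖ ^ 2 + α * l1Norm xhα ≤ ‖F y y - b‖ ^ 2 + α * l1Norm y)
    -- an exact solution x̂
    (xh : EuclideanSpace ℝ (Fin d)) (hxh : F xh xh = b)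
    -- smallness condition
    (hsmall : (c₂ * c₃ / Real.sqrt (1 - γ')) * ‖b‖ < 1)
    (a : ℝ) (haa : a = Real.sqrt (1 - γ') - c₂ * c₃ * ‖b‖) :
    ‖xα - xhα‖ ≤ Real.sqrt (α * c₂ * ‖b‖) / a + ((c₁ + c₃ * ‖xh‖) / a) * ‖xhα - xh‖ := by
  have hγpos : (0:ℝ) < 1 - γ' := by linarith
  have hSpos : 0 < Real.sqrt (1 - γ') := Real.sqrt_pos.mpr hγpos
  -- a > 0
  have ha_pos : 0 < a := by
    rw [haa]
    have h' : c₂ * c₃ * ‖b‖ / Real.sqrt (1 - γ') < 1 := by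
      calc c₂ * c₃ * ‖b‖ / Real.sqrt (1 - γ')
          = (c₂ * c₃ / Real.sqrt (1 - γ')) * ‖b‖ := by ring
        _ < 1 := hsmall
    have := (div_lt_one hSpos).mp h'
    linarith
  set S := Real.sqrt (1 - γ') with hS
  set D := ‖xα - xhα‖ with hD
  -- bound on 𝒥(xα): ‖F xα xα − b‖² + α l1 xα ≤ α c₂ ‖b‖
  obtain ⟨z, hz1, hz2⟩ := h2 xα
  have hJα : ‖F xα xα - b‖ ^ 2 + α * l1Norm xα ≤ α * (c₂ * ‖b‖) := by
    have := hxα_fix z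
    rw [hz1, sub_self, norm_zero] at this
    have h0 : α * l1Norm z ≤ α * (c₂ * ‖b‖) := by
      exact mul_le_mul_of_nonneg_left hz2 hα.le
    calc ‖F xα xα - b‖ ^ 2 + α * l1Norm xα ≤ 0 ^ 2 + α * l1Norm z := this
      _ = α * l1Norm z := by ring
      _ ≤ α * (c₂ * ‖b‖) := h0
  have hres : ‖F xα xα - b‖ ≤ Real.sqrt (α * c₂ * ‖b‖) := by
    have h1' : ‖F xα xα - b‖ ^ 2 ≤ α * c₂ * ‖b‖ := by
      have := mul_nonneg hα.le (l1Norm_nonneg xα)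
      nlinarith
    calc ‖F xα xα - b‖ = Real.sqrt (‖F xα xα - b‖ ^ 2) :=
          (Real.sqrt_sq (norm_nonneg _)).symm
      _ ≤ Real.sqrt (α * c₂ * ‖b‖) := Real.sqrt_le_sqrt h1'
  -- l1 bound on xhα
  have hxhα_l1 : ‖xhα‖ ≤ c₂ * ‖b‖ := by
    have hmin := hxhα_min xα
    have hl1 : α * l1Norm xhα ≤ α * (c₂ * ‖b‖) := by nlinarith [sq_nonneg ‖F xhα xhα - b‖]
    have := (mul_le_mul_iff_right₀ hα).mp hl1
    exact le_trans (norm_le_l1Norm xhα) this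
  -- ‖F xhα xhα − b‖ ≤ (c₁ + c₃‖xh‖)‖xhα − xh‖
  have hmid : ‖F xhα xhα - b‖ ≤ (c₁ + c₃ * ‖xh‖) * ‖xhα - xh‖ := by
    have hdecomp : F xhα xhα - b = F xhα (xhα - xh) + (F xhα - F xh) xh := by
      rw [← hxh]
      simp [map_sub, ContinuousLinearMap.sub_apply]
    rw [hdecomp]
    calc ‖F xhα (xhα - xh) + (F xhα - F xh) xh‖
        ≤ ‖F xhα (xhα - xh)‖ + ‖(F xhα - F xh) xh‖ := norm_add_le _ _
      _ ≤ ‖F xhα‖ * ‖xhα - xh‖ + ‖F xhα - F xh‖ * ‖xh‖ := by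
          gcongr <;> exact ContinuousLinearMap.le_opNorm _ _
      _ ≤ c₁ * ‖xhα - xh‖ + (c₃ * ‖xhα - xh‖) * ‖xh‖ := by
          gcongr
          · exact h1 xhα
          · exact h3 xhα xh
      _ = (c₁ + c₃ * ‖xh‖) * ‖xhα - xh‖ := by ring
  -- sparsity of the difference
  have hsupp : (suppCard (xα - xhα) : ℝ) ≤ K + k := by
    have h := suppCard_sub_le xα xhα
    have h2' : (suppCard (xα - xhα) : ℝ) ≤ (suppCard xα : ℝ) + (suppCard xhα : ℝ) := by
      exact_mod_cast h
    have hxk : (suppCard xα : ℝ) ≤ (k : ℝ) := by exact_mod_cast hxα_sparse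
    linarith
  -- restricted isometry: S * D ≤ ‖F xα (xα − xhα)‖
  have hRI : S * D ≤ ‖F xα (xα - xhα)‖ := by
    have h := ha (xα - xhα) hsupp
    have hsq : (S * D) ^ 2 = (1 - γ') * ‖xα - xhα‖ ^ 2 := by
      rw [mul_pow, hS, Real.sq_sqrt hγpos.le, hD]
    calc S * D = Real.sqrt ((S * D) ^ 2) :=
          (Real.sqrt_sq (by positivity)).symm
      _ ≤ Real.sqrt (‖F xα (xα - xhα)‖ ^ 2) := by
          apply Real.sqrt_le_sqrt; rw [hsq]; exact h
      _ = ‖F xα (xα - xhα)‖ := Real.sqrt_sq (norm_nonneg _)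
  -- decompose F xα (xα − xhα)
  have hchain : S * D ≤ Real.sqrt (α * c₂ * ‖b‖) + (c₁ + c₃ * ‖xh‖) * ‖xhα - xh‖
      + c₃ * (c₂ * ‖b‖) * D := by
    have hdecomp : F xα (xα - xhα) = (F xα xα - b) - (F xhα xhα - b) - (F xα - F xhα) xhα := by
      simp [map_sub, ContinuousLinearMap.sub_apply]
    have hbd : ‖F xα (xα - xhα)‖ ≤ ‖F xα xα - b‖ + ‖F xhα xhα - b‖ + ‖(F xα - F xhα) xhα‖ := by
      rw [hdecomp]
      calc ‖(F xα xα - b) - (F xhα xhα - b) - (F xα - F xhα) xhα‖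
          ≤ ‖(F xα xα - b) - (F xhα xhα - b)‖ + ‖(F xα - F xhα) xhα‖ := norm_sub_le _ _
        _ ≤ ‖F xα xα - b‖ + ‖F xhα xhα - b‖ + ‖(F xα - F xhα) xhα‖ := by
            have := norm_sub_le (F xα xα - b) (F xhα xhα - b)
            linarith
    have hlast : ‖(F xα - F xhα) xhα‖ ≤ c₃ * (c₂ * ‖b‖) * D := by
      calc ‖(F xα - F xhα) xhα‖ ≤ ‖F xα - F xhα‖ * ‖xhα‖ :=
            ContinuousLinearMap.le_opNorm _ _
        _ ≤ (c₃ * ‖xα - xhα‖) * (c₂ * ‖b‖) := by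
            apply mul_le_mul (h3 xα xhα) hxhα_l1 (norm_nonneg _)
            positivity
        _ = c₃ * (c₂ * ‖b‖) * D := by rw [hD]; ring
    have := hRI.trans hbd
    linarith
  -- conclude
  have hfin : D * a ≤ Real.sqrt (α * c₂ * ‖b‖) + (c₁ + c₃ * ‖xh‖) * ‖xhα - xh‖ := by
    rw [haa]
    nlinarith [hchain]
  have heq : Real.sqrt (α * c₂ * ‖b‖) / a + ((c₁ + c₃ * ‖xh‖) / a) * ‖xhα - xh‖
      = (Real.sqrt (α * c₂ * ‖b‖) + (c₁ + c₃ * ‖xh‖) * ‖xhα - xh‖) / a := by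
    field_simp
  rw [heq, le_div_iff₀ ha_pos]
  exact hfin
end
end

section
/- Under the assumptions of the soft-thresholding convergence theorem, suppose additionally that the two-sided bound (1−γ̃)‖y‖² ≤ ‖F(x̂)y‖² holds for all (K+k)-sparse y where x̂ is a K-sparse vector with F(x̂)x̂ = b, and that (c₂c₃/√(1−γ̃))‖b‖ < 1. Then the fixed point x_α satisfies ‖x_α − x̂‖₂ ≤ √(α c₂‖b‖) / (√(1−γ̃) − c₂c₃‖b‖). -/
noncomputable section
open scoped BigOperators

/-- Proposition 4.7 of the paper: if the restricted isometry lower bound holds with `F(x̂)`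
for `(K+k)`-sparse vectors, where `x̂` is a `K`-sparse solution of `F(x̂)x̂ = b`, and
`(c₂c₃/√(1−γ̃))‖b‖ < 1`, then the soft-thresholding fixed point `x_α` satisfies
`‖x_α − x̂‖ ≤ √(αc₂‖b‖)/(√(1−γ̃) − c₂c₃‖b‖)`. -/
theorem fixed_point_close_to_exact_solution
    {d n : ℕ}
    (F : EuclideanSpace ℝ (Fin d) → (EuclideanSpace ℝ (Fin d) →L[ℝ] EuclideanSpace ℝ (Fin n)))
    (b : EuclideanSpace ℝ (Fin n)) (α : ℝ) (hα : 0 < α)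
    (c₁ c₂ c₃ : ℝ) (hc₁ : 0 < c₁) (hc₂ : 0 < c₂) (hc₃ : 0 < c₃)
    (γ' : ℝ) (hγ'0 : 0 < γ') (hγ'1 : γ' < 1)
    -- constants for F as in the soft-thresholding theorems
    (h1 : ∀ x, ‖F x‖ ≤ c₁)
    (h2 : ∀ x, ∃ z : EuclideanSpace ℝ (Fin d), F x z = b ∧ l1Norm z ≤ c₂ * ‖b‖)
    (h3 : ∀ x y, ‖F x - F y‖ ≤ c₃ * ‖x - y‖)
    -- the k-sparse fixed point x_α, with ‖x_α‖ ≤ c₂‖b‖ and its energy bound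
    (k : ℕ) (K : ℝ) (xα : EuclideanSpace ℝ (Fin d)) (hxα_sparse : suppCard xα ≤ k)
    (hxα_fix : ∀ y, ‖F xα xα - b‖ ^ 2 + α * l1Norm xα ≤ ‖F xα y - b‖ ^ 2 + α * l1Norm y)
    (hxα_norm : ‖xα‖ ≤ c₂ * ‖b‖)
    (hxα_energy : ‖F xα xα - b‖ ^ 2 + α * l1Norm xα ≤ α * c₂ * ‖b‖)
    -- a K-sparse exact solution x̂
    (xh : EuclideanSpace ℝ (Fin d)) (hxh_sparse : (suppCard xh : ℝ) ≤ K)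
    (hxh : F xh xh = b)
    -- restricted isometry lower bound at x̂ on (K+k)-sparse vectors
    (ha : ∀ y : EuclideanSpace ℝ (Fin d), (suppCard y : ℝ) ≤ K + k →
      (1 - γ') * ‖y‖ ^ 2 ≤ ‖F xh y‖ ^ 2)
    -- smallness condition
    (hsmall : (c₂ * c₃ / Real.sqrt (1 - γ')) * ‖b‖ < 1) :
    ‖xα - xh‖ ≤ Real.sqrt (α * c₂ * ‖b‖) / (Real.sqrt (1 - γ') - c₂ * c₃ * ‖b‖) := by
  set e := xα - xh with he
  have h1γ : 0 < 1 - γ' := by linarith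
  have hs : 0 < Real.sqrt (1 - γ') := Real.sqrt_pos.2 h1γ
  have hD : 0 < Real.sqrt (1 - γ') - c₂ * c₃ * ‖b‖ := by
    rw [div_mul_eq_mul_div, div_lt_one hs] at hsmall
    linarith
  -- sparsity of e
  have hesp : (suppCard e : ℝ) ≤ K + k := by
    have h0 := suppCard_sub_le xα xh
    have h0' : (suppCard e : ℝ) ≤ (suppCard xα : ℝ) + (suppCard xh : ℝ) := by
      exact_mod_cast h0
    have hk : (suppCard xα : ℝ) ≤ (k : ℝ) := by exact_mod_cast hxα_sparse
    linarith
  have hri := ha e hesp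
  have hFe : F xh e = F xh xα - b := by rw [he, map_sub, hxh]
  have step1 : Real.sqrt (1 - γ') * ‖e‖ ≤ ‖F xh xα - b‖ := by
    rw [← hFe]
    have h := Real.sqrt_le_sqrt hri
    rwa [Real.sqrt_mul h1γ.le, Real.sqrt_sq (norm_nonneg e),
      Real.sqrt_sq (norm_nonneg _)] at h
  have hE : ‖F xα xα - b‖ ≤ Real.sqrt (α * c₂ * ‖b‖) := by
    have hl1 : 0 ≤ l1Norm xα := Finset.sum_nonneg fun i _ => abs_nonneg _
    have h0 : 0 ≤ α * l1Norm xα := by positivity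
    have hsq : ‖F xα xα - b‖ ^ 2 ≤ α * c₂ * ‖b‖ := by linarith
    calc ‖F xα xα - b‖ = Real.sqrt (‖F xα xα - b‖ ^ 2) :=
          (Real.sqrt_sq (norm_nonneg _)).symm
      _ ≤ _ := Real.sqrt_le_sqrt hsq
  have hlip : ‖F xh xα - F xα xα‖ ≤ c₃ * ‖e‖ * (c₂ * ‖b‖) := by
    have hsub : F xh xα - F xα xα = (F xh - F xα) xα := by simp
    rw [hsub]
    calc ‖(F xh - F xα) xα‖ ≤ ‖F xh - F xα‖ * ‖xα‖ := (F xh - F xα).le_opNorm xα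
      _ ≤ (c₃ * ‖xh - xα‖) * (c₂ * ‖b‖) :=
          mul_le_mul (h3 xh xα) hxα_norm (norm_nonneg _) (by positivity)
      _ = c₃ * ‖e‖ * (c₂ * ‖b‖) := by rw [norm_sub_rev]
  have tri : ‖F xh xα - b‖ ≤ ‖F xα xα - b‖ + ‖F xh xα - F xα xα‖ := by
    have hab : F xh xα - b = (F xα xα - b) + (F xh xα - F xα xα) := by abel
    rw [hab]; exact norm_add_le _ _
  have key : ‖e‖ * (Real.sqrt (1 - γ') - c₂ * c₃ * ‖b‖) ≤ Real.sqrt (α * c₂ * ‖b‖) := by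
    nlinarith [step1, tri, hE, hlip]
  exact (le_div_iff₀ hD).2 key
end
end
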